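/- Let φ : A⁺ → S be a surjective homomorphism, and let Γ_φ be the two-sided Cayley graph of φ. For any u ∈ A⁺, there is no path in Γ_φ from the vertex (φ(u), I) to the vertex (I, φ(u)). Consequently, the path p_u from (I,φ(u)) to (φ(u),I) contains at least one transition edge. -/
import Mathlib


variable {A S : Type*}

/-- Image of a word under the extension of `φ` to the free monoid, in `S¹ = WithOne S`. -/
def phiStar [Semigroup S] (φ : A → S) (w : List A) : WithOne S :=
  (w.map fun a => (φ a : WithOne S)).prod

/-- `φ` induces a surjective homomorphism `A⁺ → S`. -/
def PlusSurj [Semigroup S] (φ : A → S) : Prop :=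
  ∀ s : S, ∃ w : List A, w ≠ [] ∧ phiStar φ w = (s : WithOne S)

/-- An edge `((s₁,t₁), a, (s₂,t₂))` of the two-sided Cayley graph `Γ_φ`. -/
def IsEdge [Semigroup S] (φ : A → S)
    (e : (WithOne S × WithOne S) × A × (WithOne S × WithOne S)) : Prop :=
  e.1.1 * (φ e.2.1 : WithOne S) = e.2.2.1 ∧ e.1.2 = (φ e.2.1 : WithOne S) * e.2.2.2

/-- There is a path labeled `w` from `p` to `q` in `Γ_φ`. -/
def HasPath [Semigroup S] (φ : A → S) (p q : WithOne S × WithOne S) (w : List A) : Prop :=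
  p.1 * phiStar φ w = q.1 ∧ p.2 = phiStar φ w * q.2

/-- There is a (possibly empty) path from `p` to `q` in `Γ_φ`. -/
def Reach [Semigroup S] (φ : A → S) (p q : WithOne S × WithOne S) : Prop :=
  ∃ w : List A, HasPath φ p q w

/-- `p` and `q` lie in the same strongly connected component of `Γ_φ`. -/
def SameSCC [Semigroup S] (φ : A → S) (p q : WithOne S × WithOne S) : Prop :=
  Reach φ p q ∧ Reach φ q p

/-- `p` is a vertex of the canonical path `p_u` of the word `u` in `Γ_φ`. -/
def OnPath [Semigroup S] (φ : A → S) (u : List A) (p : WithOne S × WithOne S) : Prop :=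
  ∃ u₁ u₂ : List A, u = u₁ ++ u₂ ∧ p = (phiStar φ u₁, phiStar φ u₂)

/-- The paths `p_u` and `p_v` meet the same strongly connected components of `Γ_φ`,
i.e. `C(p_u) = C(p_v)`. -/
def SameComponents [Semigroup S] (φ : A → S) (u v : List A) : Prop :=
  (∀ p, OnPath φ u p → ∃ q, OnPath φ v q ∧ SameSCC φ p q) ∧
  (∀ q, OnPath φ v q → ∃ p, OnPath φ u p ∧ SameSCC φ p q)

/-- The two-sided connected congruence `u ≈_φ v`. -/
def ConnCong [Semigroup S] (φ : A → S) (u v : List A) : Prop :=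
  phiStar φ u = phiStar φ v ∧ SameComponents φ u v

/-- `e` is an edge traversed by the canonical path `p_u` in `Γ_φ`. -/
def EdgeOfPath [Semigroup S] (φ : A → S) (u : List A)
    (e : (WithOne S × WithOne S) × A × (WithOne S × WithOne S)) : Prop :=
  ∃ u₁ u₂ : List A, u = u₁ ++ e.2.1 :: u₂ ∧
    e.1 = (phiStar φ u₁, phiStar φ (e.2.1 :: u₂)) ∧
    e.2.2 = (phiStar φ (u₁ ++ [e.2.1]), phiStar φ u₂)

/-- `e` is a transition edge traversed by `p_u`: an edge of `p_u` whose endpoints lie in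
distinct strongly connected components of `Γ_φ`. -/
def IsTransitionOfPath [Semigroup S] (φ : A → S) (u : List A)
    (e : (WithOne S × WithOne S) × A × (WithOne S × WithOne S)) : Prop :=
  EdgeOfPath φ u e ∧ ¬ SameSCC φ e.1 e.2.2

/-- The two-sided Karnofsky–Rhodes congruence `u ≡_φ v`: same image under `φ` and same set
of transition edges. -/
def KRCong [Semigroup S] (φ : A → S) (u v : List A) : Prop :=
  phiStar φ u = phiStar φ v ∧
  ∀ e, IsTransitionOfPath φ u e ↔ IsTransitionOfPath φ v e



lemma phiStar_append [Semigroup S] (φ : A → S) (u v : List A) :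
    phiStar φ (u ++ v) = phiStar φ u * phiStar φ v := by
  simp [phiStar]

lemma phiStar_cons [Semigroup S] (φ : A → S) (a : A) (u : List A) :
    phiStar φ (a :: u) = (φ a : WithOne S) * phiStar φ u := by
  simp [phiStar]

lemma phiStar_coe [Semigroup S] (φ : A → S) (u : List A) (hu : u ≠ []) :
    ∃ s : S, phiStar φ u = (s : WithOne S) := by
  induction u with
  | nil => exact absurd rfl hu
  | cons a t ih =>
    rcases eq_or_ne t [] with rfl | h
    · exact ⟨φ a, by simp [phiStar]⟩
    · obtain ⟨s, hs⟩ := ih h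
      exact ⟨φ a * s, by rw [phiStar_cons, hs]; rfl⟩

lemma reach_trans [Semigroup S] (φ : A → S) {p q r : WithOne S × WithOne S}
    (h1 : Reach φ p q) (h2 : Reach φ q r) : Reach φ p r := by
  obtain ⟨w, hw1, hw2⟩ := h1
  obtain ⟨w', hw1', hw2'⟩ := h2
  exact ⟨w ++ w', by rw [phiStar_append, ← mul_assoc, hw1, hw1'],
    by rw [phiStar_append, mul_assoc, ← hw2', hw2]⟩

/-- There is no path in `Γ_φ` from `(φ(u), I)` to `(I, φ(u))`; consequently the canonical
path `p_u` contains at least one transition edge. -/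
theorem no_return_path_and_transition_edge_exists [Semigroup S]
    (φ : A → S) (hφ : PlusSurj φ) (u : List A) (hu : u ≠ []) :
    ¬ Reach φ (phiStar φ u, (1 : WithOne S)) ((1 : WithOne S), phiStar φ u) ∧
    ∃ e, IsTransitionOfPath φ u e := by
  have key : ¬ Reach φ (phiStar φ u, (1 : WithOne S)) ((1 : WithOne S), phiStar φ u) := by
    rintro ⟨w, hw1, -⟩
    obtain ⟨s, hs⟩ := phiStar_coe φ u hu
    simp only [hs] at hw1
    rcases eq_or_ne w [] with rfl | hwne
    · simp [phiStar] at hw1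
    · obtain ⟨t, ht⟩ := phiStar_coe φ w hwne
      rw [ht, ← WithOne.coe_mul] at hw1
      exact WithOne.coe_ne_one hw1
  refine ⟨key, ?_⟩
  by_contra h
  push_neg at h
  apply key
  have main : ∀ u₂ u₁ : List A, u = u₁ ++ u₂ →
      Reach φ (phiStar φ u, (1 : WithOne S)) (phiStar φ u₁, phiStar φ u₂) := by
    intro u₂
    induction u₂ with
    | nil => intro u₁ h1; subst h1; exact ⟨[], by simp [phiStar], by simp [phiStar]⟩
    | cons a t ih =>
      intro u₁ h1
      have h2 : u = (u₁ ++ [a]) ++ t := by simp [h1]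
      have hr := ih (u₁ ++ [a]) h2
      set e : (WithOne S × WithOne S) × A × (WithOne S × WithOne S) :=
        ((phiStar φ u₁, phiStar φ (a :: t)), a, (phiStar φ (u₁ ++ [a]), phiStar φ t))
      have he : EdgeOfPath φ u e := ⟨u₁, t, h1, rfl, rfl⟩
      have hscc : SameSCC φ e.1 e.2.2 := by
        by_contra hn
        exact h e ⟨he, hn⟩
      exact reach_trans φ hr hscc.2
  have := main u [] rfl
  simpa [phiStar] using this
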